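/- Let F be a field, A a central simple F-algebra, and B a subalgebra of A that is isomorphic as an F-algebra to a matrix algebra M_q(F). Let C be the centralizer of B in A. Then the natural F-algebra homomorphism B ⊗_F C → A (induced by multiplication) is an isomorphism; consequently A is isomorphic as an F-algebra to M_q(C). -/

import Mathlib

open scoped TensorProduct

set_option maxHeartbeats 2000000 in
set_option synthInstance.maxHeartbeats 200000 in
/-- If `B` is a subalgebra of a central simple `F`-algebra `A` with
`B ≅ M_q(F)`, and `C` is the centralizer of `B` in `A`, then the natural map
`B ⊗[F] C → A` induced by multiplication is an isomorphism, and consequently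
`A ≅ M_q(C)`. -/
theorem matrix_subalgebra_tensor_centralizer
    (F A : Type*) [Field F] [Ring A] [Algebra F A] [FiniteDimensional F A]
    [Nontrivial A] [Algebra.IsCentral F A] [IsSimpleRing A]
    (q : ℕ) (hq : 0 < q) (B : Subalgebra F A)
    (hB : Nonempty (B ≃ₐ[F] Matrix (Fin q) (Fin q) F)) :
    Function.Bijective
      (Algebra.TensorProduct.lift B.val (Subalgebra.centralizer F (B : Set A)).val
        (fun b c => c.2 b.1 b.2)) ∧
    Nonempty (A ≃ₐ[F] Matrix (Fin q) (Fin q) (Subalgebra.centralizer F (B : Set A))) := by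
  obtain ⟨f⟩ := hB
  set C := Subalgebra.centralizer F (B : Set A) with hCdef
  set Φ := Algebra.TensorProduct.lift B.val C.val (fun b c => c.2 b.1 b.2) with hΦdef
  -- matrix units
  set eB : Fin q → Fin q → B := fun i j => f.symm (Matrix.single i j 1) with heB
  set e : Fin q → Fin q → A := fun i j => (eB i j : A) with he
  have hstd_mul : ∀ i j k l : Fin q, Matrix.single i j (1:F) * Matrix.single k l 1
      = if j = k then Matrix.single i l 1 else 0 := by
    intro i j k l
    split_ifs with h
    · subst h; rw [Matrix.single_mul_single_same, one_mul]
    · simp [h]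
  have heB_mul : ∀ i j k l, eB i j * eB k l = if j = k then eB i l else 0 := by
    intro i j k l
    rw [heB]
    simp only [← map_mul, hstd_mul]
    split_ifs <;> simp
  have he_mul : ∀ i j k l, e i j * e k l = if j = k then e i l else 0 := by
    intro i j k l
    rw [he]
    simp only
    rw [← MulMemClass.coe_mul, heB_mul]
    split_ifs <;> simp
  have hstd_one : (∑ i : Fin q, Matrix.single i i (1:F)) = 1 := by
    ext a b
    rw [Matrix.sum_apply]
    by_cases h : a = b
    · subst h
      rw [Matrix.one_apply_eq, Finset.sum_eq_single a]
      · simp [Matrix.single]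
      · intro k _ hk; simp [Matrix.single, hk]
      · simp
    · rw [Matrix.one_apply_ne h, Finset.sum_eq_zero]
      intro k _
      simp only [Matrix.single, Matrix.of_apply, ite_eq_right_iff, and_imp]
      rintro rfl rfl; exact absurd rfl h
  have heB_one : (∑ i, eB i i) = 1 := by
    rw [heB]; simp only [← map_sum, hstd_one, map_one]
  have he_one : (∑ i, e i i) = 1 := by
    rw [he]; simp only [← AddSubmonoidClass.coe_finset_sum, heB_one, OneMemClass.coe_one]
  have heB_mem : ∀ i j, e i j ∈ B := fun i j => (eB i j).2
  -- expansion of elements of B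
  have hexpB : ∀ b : B, b = ∑ s, ∑ t, f b s t • eB s t := by
    intro b
    conv_lhs => rw [← f.symm_apply_apply b, Matrix.matrix_eq_sum_single (f b)]
    rw [map_sum]
    refine Finset.sum_congr rfl fun s _ => ?_
    rw [map_sum]
    refine Finset.sum_congr rfl fun t _ => ?_
    have hst : Matrix.single s t (f b s t) = f b s t • Matrix.single s t 1 := by
      rw [Matrix.smul_single, smul_eq_mul, mul_one]
    rw [hst, map_smul, heB]
  have hexpA : ∀ b : B, (b : A) = ∑ s, ∑ t, f b s t • e s t := by
    intro b
    have h1 := hexpB b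
    calc (b : A) = ((∑ s, ∑ t, f b s t • eB s t : B) : A) := by rw [← h1]
    _ = _ := by push_cast; rfl
  -- commuting with C
  have hcomm : ∀ (x : C) (i j), e i j * (x : A) = (x : A) * e i j := fun x i j =>
    x.2 (e i j) (heB_mem i j)
  -- the c-coefficients
  have hcmem : ∀ (a : A) (i j : Fin q), (∑ k, e k i * a * e j k) ∈ C := by
    intro a i j
    rw [hCdef, Subalgebra.mem_centralizer_iff]
    intro g hg
    have : ∀ s t : Fin q, e s t * (∑ k, e k i * a * e j k) = (∑ k, e k i * a * e j k) * e s t := by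
      intro s t
      have L : e s t * (∑ k, e k i * a * e j k) = e s i * a * e j t := by
        rw [Finset.mul_sum, Finset.sum_eq_single t]
        · rw [← mul_assoc, ← mul_assoc, he_mul, if_pos rfl]
        · intro k _ hk
          rw [← mul_assoc, ← mul_assoc, he_mul, if_neg (Ne.symm hk), zero_mul, zero_mul]
        · simp
      have R : (∑ k, e k i * a * e j k) * e s t = e s i * a * e j t := by
        rw [Finset.sum_mul, Finset.sum_eq_single s]
        · rw [mul_assoc, he_mul, if_pos rfl]
        · intro k _ hk
          rw [mul_assoc, he_mul, if_neg hk, mul_zero]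
        · simp
      rw [L, R]
    have hgA : g = ∑ s, ∑ t, f ⟨g, hg⟩ s t • e s t := hexpA ⟨g, hg⟩
    rw [hgA, Finset.sum_mul, Finset.mul_sum]
    refine Finset.sum_congr rfl fun s _ => ?_
    rw [Finset.sum_mul, Finset.mul_sum]
    refine Finset.sum_congr rfl fun t _ => ?_
    rw [smul_mul_assoc, mul_smul_comm, this]
  -- linear coefficient maps
  set cLin : Fin q → Fin q → (A →ₗ[F] C) := fun i j =>
    { toFun := fun a => ⟨∑ k, e k i * a * e j k, hcmem a i j⟩
      map_add' := by
        intro a b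
        ext
        push_cast
        rw [← Finset.sum_add_distrib]
        exact Finset.sum_congr rfl fun k _ => by rw [mul_add, add_mul]
      map_smul' := by
        intro r a
        ext
        push_cast
        rw [Finset.smul_sum]
        exact Finset.sum_congr rfl fun k _ => by
          rw [mul_smul_comm, smul_mul_assoc]; rfl } with hcLin
  set ψ : A →ₗ[F] (B ⊗[F] C) :=
    ∑ i : Fin q, ∑ j : Fin q, (TensorProduct.mk F B C (eB i j)).comp (cLin i j) with hψ
  have hψ_apply : ∀ a : A, ψ a = ∑ i : Fin q, ∑ j : Fin q, (eB i j) ⊗ₜ[F] (cLin i j a) := by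
    intro a
    rw [hψ]
    simp [LinearMap.sum_apply]
  have hΦ_tmul : ∀ (b : B) (x : C), Φ (b ⊗ₜ x) = (b : A) * (x : A) := by
    intro b x
    rw [hΦdef]
    rfl
  -- right inverse
  have hright : ∀ a : A, Φ (ψ a) = a := by
    intro a
    rw [hψ_apply, map_sum]
    have : ∀ i : Fin q, Φ (∑ j, (eB i j) ⊗ₜ[F] (cLin i j a)) = e i i * a := by
      intro i
      rw [map_sum]
      have : ∀ j, Φ ((eB i j) ⊗ₜ[F] (cLin i j a)) = e i i * a * e j j := by
        intro j
        rw [hΦ_tmul]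
        show e i j * (∑ k, e k i * a * e j k) = _
        rw [Finset.mul_sum, Finset.sum_eq_single j]
        · rw [← mul_assoc, ← mul_assoc, he_mul, if_pos rfl]
        · intro k _ hk
          rw [← mul_assoc, ← mul_assoc, he_mul, if_neg (Ne.symm hk), zero_mul, zero_mul]
        · simp
      rw [Finset.sum_congr rfl fun j _ => this j, ← Finset.mul_sum, he_one, mul_one]
    rw [Finset.sum_congr rfl fun i _ => this i, ← Finset.sum_mul, he_one, one_mul]
  -- key computation for the left inverse
  have hkey : ∀ (s t : Fin q) (x : C) (i j : Fin q),
      cLin i j (e s t * (x : A)) = if i = s ∧ j = t then x else 0 := by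
    intro s t x i j
    ext
    show (∑ k, e k i * (e s t * (x:A)) * e j k) = _
    have hterm : ∀ k, e k i * (e s t * (x:A)) * e j k
        = (if i = s ∧ t = j then e k k else 0) * (x : A) := by
      intro k
      calc e k i * (e s t * (x:A)) * e j k
          = (e k i * e s t) * ((x:A) * e j k) := by
            rw [show e k i * (e s t * (x:A)) = e k i * e s t * (x:A) from
              (mul_assoc _ _ _).symm, mul_assoc (e k i * e s t)]
        _ = (e k i * e s t) * (e j k * (x:A)) := by rw [← hcomm x j k]
        _ = ((e k i * e s t) * e j k) * (x:A) := (mul_assoc _ _ _).symm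
        _ = (if i = s ∧ t = j then e k k else 0) * (x : A) := by
            rw [he_mul]
            by_cases h1 : i = s <;> by_cases h2 : t = j <;>
              simp [h1, h2, he_mul]
    rw [Finset.sum_congr rfl fun k _ => hterm k]
    by_cases h : i = s ∧ t = j
    · rw [if_pos ⟨h.1, h.2.symm⟩]
      simp only [if_pos h, ← Finset.sum_mul, he_one, one_mul]
    · rw [if_neg (fun hc => h ⟨hc.1, hc.2.symm⟩)]
      simp only [if_neg h, zero_mul, Finset.sum_const_zero]
      simp
  have hleft : ∀ z : B ⊗[F] C, ψ (Φ z) = z := by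
    intro z
    induction z using TensorProduct.induction_on with
    | zero => rw [map_zero, map_zero]
    | add x y hx hy => rw [map_add, map_add, hx, hy]
    | tmul b x =>
      rw [hΦ_tmul]
      have hb : (b : A) * (x : A) = ∑ s, ∑ t, f b s t • (e s t * (x : A)) := by
        conv_lhs => rw [show (b:A) = ∑ s, ∑ t, f b s t • e s t from by
          conv_lhs => rw [hexpB b]
          push_cast
          rfl]
        rw [Finset.sum_mul]
        exact Finset.sum_congr rfl fun s _ => by
          rw [Finset.sum_mul]
          exact Finset.sum_congr rfl fun t _ => (smul_mul_assoc _ _ _)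
      rw [hb, map_sum]
      have : ∀ s, ψ (∑ t, f b s t • (e s t * (x:A))) = ∑ t, f b s t • ((eB s t) ⊗ₜ[F] x) := by
        intro s
        rw [map_sum]
        refine Finset.sum_congr rfl fun t _ => ?_
        rw [map_smul]
        congr 1
        rw [hψ_apply]
        rw [Finset.sum_eq_single s]
        · rw [Finset.sum_eq_single t]
          · rw [hkey, if_pos ⟨rfl, rfl⟩]
          · intro k _ hk
            rw [hkey, if_neg (fun h => hk h.2), TensorProduct.tmul_zero]
          · simp
        · intro k _ hk
          rw [Finset.sum_eq_zero]
          intro l _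
          rw [hkey, if_neg (fun h => hk h.1), TensorProduct.tmul_zero]
        · simp
      rw [Finset.sum_congr rfl fun s _ => this s]
      have : (∑ s, ∑ t, f b s t • ((eB s t) ⊗ₜ[F] x)) = (∑ s, ∑ t, f b s t • eB s t) ⊗ₜ[F] x := by
        rw [TensorProduct.sum_tmul]
        refine Finset.sum_congr rfl fun s _ => ?_
        rw [TensorProduct.sum_tmul]
        exact Finset.sum_congr rfl fun t _ => (TensorProduct.smul_tmul' _ _ _).symm
      rw [this, ← hexpB b]
  have hbij : Function.Bijective Φ :=
    Function.bijective_iff_has_inverse.mpr ⟨ψ, hleft, hright⟩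
  refine ⟨hbij, ⟨?_⟩⟩
  exact ((AlgEquiv.ofBijective Φ hbij).symm.trans
    ((Algebra.TensorProduct.congr f AlgEquiv.refl).trans
      ((Algebra.TensorProduct.comm F _ _).trans
        (matrixEquivTensor (Fin q) F C).symm)))
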